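/- For every integer p ≥ 2, let C = {x ∈ ℝ^p : x_1 > x_2 > ⋯ > x_p > 0 and x_1 + x_2 < 1} and C_s = {x ∈ ℝ^p : x_1 > x_2 > ⋯ > x_p > 0 and x_1 < 1}. Then the Lebesgue volume of C_s equals 2^(p−1) times the Lebesgue volume of C. -/

import Mathlib

open MeasureTheory

/-- For the affine Weyl group of type `B_p`, the volume of the simplex `C_s` (cut out by the
short dominant root `θ_s = e₁`) is `2^(p-1)` times the volume of the fundamental alcove `C`
(cut out by the highest root `θ = e₁ + e₂`). -/
theorem volume_Cs_eq_Bp (p : ℕ) (hp : 2 ≤ p) :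
    volume {x : Fin p → ℝ | (∀ i j : Fin p, i < j → x j < x i) ∧ (∀ i, 0 < x i) ∧
        x ⟨0, by omega⟩ < 1}
      = 2 ^ (p - 1) *
        volume {x : Fin p → ℝ | (∀ i j : Fin p, i < j → x j < x i) ∧ (∀ i, 0 < x i) ∧
          x ⟨0, by omega⟩ + x ⟨1, by omega⟩ < 1} := by
  set i0 : Fin p := ⟨0, by omega⟩ with hi0
  set i1 : Fin p := ⟨1, by omega⟩ with hi1
  have hi01 : i0 < i1 := by simp [hi0, hi1, Fin.lt_def]
  have hne10 : i1 ≠ i0 := hi01.ne'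
  have hval0 : ∀ j : Fin p, j ≠ i0 → 1 ≤ (j : ℕ) := by
    intro j h
    by_contra hc
    exact h (Fin.ext (by simp [hi0]; omega))
  have hgt1 : ∀ j : Fin p, j ≠ i0 → j ≠ i1 → i1 < j := by
    intro j h0 h1
    have hv0 := hval0 j h0
    have hv1 : (j : ℕ) ≠ 1 := by
      intro hc; exact h1 (Fin.ext (by simp [hi1, hc]))
    simp only [Fin.lt_def, hi1]
    omega
  set Cs : Set (Fin p → ℝ) :=
    {x : Fin p → ℝ | (∀ i j : Fin p, i < j → x j < x i) ∧ (∀ i, 0 < x i) ∧ x i0 < 1} with hCs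
  set C : Set (Fin p → ℝ) :=
    {x : Fin p → ℝ | (∀ i j : Fin p, i < j → x j < x i) ∧ (∀ i, 0 < x i) ∧
      x i0 + x i1 < 1} with hC
  let S : (Fin p → ℝ) →ₗ[ℝ] (Fin p → ℝ) :=
    { toFun := fun x i => if i = i0 then x i0 + x i1 else 2 * x i
      map_add' := by
        intro x y; funext i; by_cases h : i = i0 <;> simp [h] <;> ring
      map_smul' := by
        intro c x; funext i; by_cases h : i = i0 <;> simp [h] <;> ring }
  have hSapp : ∀ (x : Fin p → ℝ) (i : Fin p),
      S x i = if i = i0 then x i0 + x i1 else 2 * x i := fun _ _ => rfl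
  -- determinant of S
  have hdet : LinearMap.det S = 2 ^ (p - 1) := by
    rw [← LinearMap.det_toMatrix']
    have htri : (LinearMap.toMatrix' S).BlockTriangular id := by
      intro i j hij
      simp only [LinearMap.toMatrix'_apply, hSapp]
      have hji : (j : Fin p) < i := hij
      have hne : i ≠ i0 := by
        intro h
        rw [h] at hji
        have : (j : ℕ) < 0 := by simpa [hi0, Fin.lt_def] using hji
        omega
      rw [if_neg hne, Pi.single_eq_of_ne (by intro h; rw [h] at hji; exact absurd hji (lt_irrefl _))]
      ring
    rw [Matrix.det_of_upperTriangular htri]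
    have hdiag : ∀ i : Fin p, (LinearMap.toMatrix' S) i i
        = if i = i0 then 1 else 2 := by
      intro i
      simp only [LinearMap.toMatrix'_apply, hSapp]
      by_cases h : i = i0
      · rw [if_pos h, if_pos h, h]
        simp [hne10]
      · rw [if_neg h, if_neg h]
        simp
    rw [Finset.prod_congr rfl fun i _ => hdiag i]
    rw [← Finset.mul_prod_erase Finset.univ _ (Finset.mem_univ i0), if_pos rfl, one_mul]
    rw [Finset.prod_eq_pow_card
      (fun i hi => if_neg (Finset.ne_of_mem_erase hi))]
    rw [Finset.card_erase_of_mem (Finset.mem_univ i0), Finset.card_univ, Fintype.card_fin]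
  -- preimage identity
  have hpre : S ⁻¹' Cs = C := by
    ext x
    simp only [Set.mem_preimage, hCs, hC, Set.mem_setOf_eq]
    constructor
    · rintro ⟨hord, hpos, hlt⟩
      have hx1 : 0 < x i1 := by
        have := hpos i1
        rw [hSapp, if_neg hne10] at this
        linarith
      have hx01 : x i1 < x i0 := by
        have := hord i0 i1 hi01
        rw [hSapp, hSapp, if_pos rfl, if_neg hne10] at this
        linarith
      have hposrest : ∀ i : Fin p, i ≠ i0 → 0 < x i := by
        intro i hi
        have := hpos i
        rw [hSapp, if_neg hi] at this
        linarith
      refine ⟨?_, ?_, ?_⟩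
      · intro i j hij
        have hj : j ≠ i0 := by
          intro h
          rw [h] at hij
          have : (i : ℕ) < 0 := by simpa [hi0, Fin.lt_def] using hij
          omega
        by_cases hi : i = i0
        · rw [hi]
          by_cases hj1 : j = i1
          · rw [hj1]; exact hx01
          · have h1j := hord i1 j (hgt1 j hj hj1)
            rw [hSapp, hSapp, if_neg hne10, if_neg hj] at h1j
            linarith
        · have := hord i j hij
          rw [hSapp, hSapp, if_neg hi, if_neg hj] at this
          linarith
      · intro i
        by_cases hi : i = i0
        · rw [hi]; linarith
        · exact hposrest i hi
      · have := hlt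
        rw [hSapp, if_pos rfl] at this
        exact this
    · rintro ⟨hord, hpos, hlt⟩
      have hx01 : x i1 < x i0 := hord i0 i1 hi01
      refine ⟨?_, ?_, ?_⟩
      · intro i j hij
        have hj : j ≠ i0 := by
          intro h
          rw [h] at hij
          have : (i : ℕ) < 0 := by simpa [hi0, Fin.lt_def] using hij
          omega
        rw [hSapp, hSapp, if_neg hj]
        by_cases hi : i = i0
        · rw [if_pos hi]
          by_cases hj1 : j = i1
          · rw [hj1]; linarith
          · have h1 := hord i1 j (hgt1 j hj hj1)
            have h2 := hord i0 j (by rw [← hi]; exact hij)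
            linarith
        · rw [if_neg hi]
          have := hord i j hij
          linarith
      · intro i
        rw [hSapp]
        by_cases hi : i = i0
        · rw [if_pos hi]
          have := hpos i0
          have := hpos i1
          linarith
        · rw [if_neg hi]
          have := hpos i
          linarith
      · rw [hSapp, if_pos rfl]
        exact hlt
  have hdet_ne : LinearMap.det S ≠ 0 := by
    rw [hdet]; positivity
  have key := Measure.addHaar_preimage_linearMap volume hdet_ne Cs
  rw [hpre, hdet] at key
  have habs : ENNReal.ofReal |((2:ℝ) ^ (p - 1))⁻¹| = ((2:ENNReal) ^ (p - 1))⁻¹ := by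
    rw [abs_of_pos (by positivity)]
    rw [ENNReal.ofReal_inv_of_pos (by positivity)]
    congr 1
    rw [ENNReal.ofReal_pow (by norm_num : (0:ℝ) ≤ 2)]
    norm_num
  rw [habs] at key
  have h2 : ((2:ENNReal) ^ (p - 1)) ≠ 0 := by positivity
  have h2' : ((2:ENNReal) ^ (p - 1)) ≠ ⊤ := ENNReal.pow_ne_top (by norm_num)
  calc volume Cs = 2 ^ (p-1) * (((2:ENNReal) ^ (p - 1))⁻¹ * volume Cs) := by
        rw [← mul_assoc, ENNReal.mul_inv_cancel h2 h2', one_mul]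
    _ = 2 ^ (p-1) * volume C := by rw [key]
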